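/- Let α ∈ [π/2, π) and θ ∈ [-π, π]. Then all three roots of the cubic polynomial f(z) = z^3 + (cos α + (1/2)e^{-iθ})z^2 - (1/2)e^{-iθ} lie in the closed unit disk. -/

import Mathlib

lemma key_ineq (r c x : ℝ) (hr : 1 < r) (hc0 : c ≤ 0) (hc1 : -1 < c) (hx : x ≤ r) :
    (r^2+1)^2 - 4*x^2 < 4*r^4*(r^2 + 2*c*x + c^2) := by
  have hr2 : 1 < r^2 := by nlinarith
  have hr4 : 1 < r^4 := by nlinarith
  rcases le_or_gt (c^2*r^6) 1 with hA | hB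
  · have h2 : 0 < r^2 * (4*r^4*(r^2 + 2*c*x + c^2) - ((r^2+1)^2 - 4*x^2)) := by
      nlinarith [sq_nonneg (x + r^4*c),
        mul_nonneg (by linarith : (0:ℝ) ≤ 1 - c^2*r^6) (by linarith : (0:ℝ) ≤ r^4 - 1),
        mul_pos (pow_pos (by linarith : (0:ℝ) < r^2 - 1) 2) (by nlinarith : (0:ℝ) < 4*r^4+7*r^2+4),
        mul_nonneg (sq_nonneg (x + r^4*c)) (sq_nonneg r)]
    nlinarith [h2, sq_nonneg r, hr]
  · have hc3 : r^3*c ≤ 0 := by nlinarith [pow_pos (by linarith : (0:ℝ) < r) 3]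
    have hB' : r^3*c < -1 := by nlinarith [hB]
    have h1 : 0 ≤ (r - x) * (-(x + r + 2*r^4*c)) := by
      apply mul_nonneg (by linarith)
      nlinarith [hB', hr]
    have hf1 : 0 < 2*r^2*(r+c) - r^2 + 1 := by nlinarith [sq_nonneg (r-1), hc1, hr]
    have hf2 : 0 < 2*r^2*(r+c) + r^2 - 1 := by nlinarith [hc1, hr]
    have h2 : 0 < (2*r^2*(r+c) - r^2 + 1) * (2*r^2*(r+c) + r^2 - 1) := mul_pos hf1 hf2
    nlinarith [h1, h2]

/-- For `α ∈ [π/2, π)` and `θ ∈ [-π, π]`, all three roots of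
`z³ + (cos α + (1/2)e^{-iθ})z² - (1/2)e^{-iθ}` lie in the closed unit disk. -/
theorem cubic_roots_in_closed_disk (α θ : ℝ) (hα₁ : Real.pi / 2 ≤ α) (hα₂ : α < Real.pi)
    (hθ₁ : -Real.pi ≤ θ) (hθ₂ : θ ≤ Real.pi) (z : ℂ)
    (hz : z ^ 3 + ((Real.cos α : ℂ) + (1 / 2) * Complex.exp (-(θ : ℂ) * Complex.I)) * z ^ 2
        - (1 / 2) * Complex.exp (-(θ : ℂ) * Complex.I) = 0) :
    ‖z‖ ≤ 1 := by
  by_contra hr1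
  push_neg at hr1
  set c := Real.cos α with hc
  have hc0 : c ≤ 0 := Real.cos_nonpos_of_pi_div_two_le_of_le hα₁ (by linarith [Real.pi_pos])
  have hc1 : -1 < c := by
    have h := Real.cos_lt_cos_of_nonneg_of_le_pi (by linarith [Real.pi_pos]) le_rfl hα₂
    rwa [Real.cos_pi] at h
  have hw : ‖Complex.exp (-(θ : ℂ) * Complex.I)‖ = 1 := by
    rw [Complex.norm_exp]
    simp
  have heq : z^2 * (z + (c:ℂ)) = (1/2) * Complex.exp (-(θ:ℂ)*Complex.I) * (1 - z^2) := by
    linear_combination hz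
  have hnorm : ‖z‖^2 * ‖z + (c:ℂ)‖ = (1/2) * ‖1 - z^2‖ := by
    have h := congrArg norm heq
    rw [norm_mul, norm_pow, norm_mul, norm_mul, hw] at h
    simpa using h
  set r := ‖z‖ with hrdef
  set x := z.re with hxdef
  set y := z.im with hydef
  have e1 : x^2 + y^2 = r^2 := by
    rw [hrdef, Complex.sq_norm, Complex.normSq_apply]; ring
  have e2 : ‖z + (c:ℂ)‖^2 = (x+c)^2 + y^2 := by
    rw [Complex.sq_norm, Complex.normSq_apply]
    simp only [Complex.add_re, Complex.add_im, Complex.ofReal_re, Complex.ofReal_im,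
      ← hxdef, ← hydef]
    ring
  have e3 : ‖1 - z^2‖^2 = (1 - (x^2 - y^2))^2 + (2*x*y)^2 := by
    rw [Complex.sq_norm, Complex.normSq_apply]
    simp only [Complex.sub_re, Complex.sub_im, Complex.one_re, Complex.one_im, pow_two,
      Complex.mul_re, Complex.mul_im, ← hxdef, ← hydef]
    ring
  have hx : x ≤ r := Complex.re_le_norm z
  have e4 : (x+c)^2 + y^2 = r^2 + 2*c*x + c^2 := by linear_combination e1
  have e5 : (1 - (x^2 - y^2))^2 + (2*x*y)^2 = (r^2+1)^2 - 4*x^2 := by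
    linear_combination (x^2 + y^2 + r^2 + 2) * e1
  have hsq : 4 * (r^4 * (r^2 + 2*c*x + c^2)) = (r^2+1)^2 - 4*x^2 := by
    have h := congrArg (·^2) hnorm
    simp only [mul_pow] at h
    rw [e2, e3, e4, e5] at h
    linear_combination 4 * h
  have hk := key_ineq r c x hr1 hc0 hc1 hx
  linarith [hk, hsq]
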